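/- Let m ≥ 2 be a natural number, B > 0 a real number, and L : ℕ → ℝ a function such that for every prime p one has |L(p) − 1| ≤ 2·B·p^{−(m+1)/2}. Then for every natural number P ≥ 2, the tail sum over primes satisfies ∑_{p prime, p > P} |L(p) − 1| ≤ (4·B/(m−1))·(P−1)^{−(m−1)/2}. -/
import Mathlib

open Set MeasureTheory

theorem tail_sum_bound (m : ℕ) (hm : 2 ≤ m) (B : ℝ) (hB : 0 < B) (L : ℕ → ℝ)
    (hL : ∀ p : ℕ, p.Prime → |L p - 1| ≤ 2 * B * (p : ℝ) ^ (-(((m : ℝ) + 1) / 2))) :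
    ∀ P : ℕ, 2 ≤ P →
      Summable (fun p : {p : ℕ // p.Prime ∧ P < p} => |L p.1 - 1|) ∧
      (∑' p : {p : ℕ // p.Prime ∧ P < p}, |L p.1 - 1|)
        ≤ (4 * B / ((m : ℝ) - 1)) * ((P : ℝ) - 1) ^ (-(((m : ℝ) - 1) / 2)) := by
  intro P hP
  have hm2 : (2:ℝ) ≤ (m:ℝ) := by exact_mod_cast hm
  have hP2 : (2:ℝ) ≤ (P:ℝ) := by exact_mod_cast hP
  set s : ℝ := ((m:ℝ) + 1) / 2 with hs
  have hs1 : -s < -1 := by simp only [hs]; linarith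
  have hgsum : Summable (fun n : ℕ => 2 * B * (n:ℝ) ^ (-s)) :=
    (Real.summable_nat_rpow.mpr hs1).mul_left _
  have hsub : Summable (fun p : {p : ℕ // p.Prime ∧ P < p} => 2 * B * ((p:ℕ):ℝ) ^ (-s)) :=
    hgsum.subtype _
  have habs : Summable (fun p : {p : ℕ // p.Prime ∧ P < p} => |L p.1 - 1|) :=
    Summable.of_nonneg_of_le (fun p => abs_nonneg _) (fun p => hL p.1 p.2.1) hsub
  refine ⟨habs, ?_⟩
  have hPpos : (0:ℝ) < (P:ℝ) := by linarith
  -- the improper integral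
  have hint : ∫ x in Ioi (P:ℝ), x ^ (-s) = -(P:ℝ) ^ (-s + 1) / (-s + 1) :=
    integral_Ioi_rpow_of_lt hs1 hPpos
  -- monotonicity of rpow in the base for nonpositive exponent
  have hanti : ∀ N : ℕ, AntitoneOn (fun x : ℝ => x ^ (-s)) (Icc (P:ℝ) (N:ℝ)) := by
    intro N x hx y hy hxy
    exact Real.rpow_le_rpow_of_nonpos (by linarith [hx.1]) hxy (by linarith : -s ≤ 0)
  have hIntOn : IntegrableOn (fun x : ℝ => x ^ (-s)) (Ioi (P:ℝ)) :=
    integrableOn_Ioi_rpow_of_lt hs1 hPpos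
  -- key bound on finite sums of n^{-s} over n in Ico (P+1) (N+1)
  have hkey : ∀ N : ℕ, P ≤ N →
      ∑ n ∈ Finset.Ico (P+1) (N+1), ((n:ℕ):ℝ) ^ (-s) ≤ -(P:ℝ) ^ (-s + 1) / (-s + 1) := by
    intro N hN
    have h1 : ∑ n ∈ Finset.Ico (P+1) (N+1), ((n:ℕ):ℝ) ^ (-s)
        = ∑ i ∈ Finset.Ico P N, (fun x : ℝ => x ^ (-s)) ((i + 1 : ℕ) : ℝ) := by
      rw [← Finset.sum_Ico_add' (fun n : ℕ => ((n:ℕ):ℝ) ^ (-s)) P N (c := 1)]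
    have h2 := AntitoneOn.sum_le_integral_Ico hN (hanti N)
    rw [h1]
    refine h2.trans ?_
    have hNP : (P:ℝ) ≤ (N:ℝ) := by exact_mod_cast hN
    rw [intervalIntegral.integral_of_le hNP, ← hint]
    apply setIntegral_mono_set hIntOn
    · filter_upwards [ae_restrict_mem measurableSet_Ioi] with x hx
      simpa using Real.rpow_nonneg (hPpos.trans hx).le (-s)
    · exact HasSubset.Subset.eventuallyLE Ioc_subset_Ioi_self
  have hm1 : (0:ℝ) < (m:ℝ) - 1 := by linarith
  have hexp : -s + 1 = -(((m:ℝ) - 1) / 2) := by rw [hs]; ring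
  have hrpow : (P:ℝ) ^ (-(((m:ℝ) - 1) / 2)) ≤ ((P:ℝ) - 1) ^ (-(((m:ℝ) - 1) / 2)) :=
    Real.rpow_le_rpow_of_nonpos (by linarith) (by linarith) (by linarith)
  have hconst : 2 * B * (-(P:ℝ) ^ (-s + 1) / (-s + 1))
      ≤ 4 * B / ((m:ℝ) - 1) * ((P:ℝ) - 1) ^ (-(((m : ℝ) - 1) / 2)) := by
    rw [hexp]
    have heq : 2 * B * (-(P:ℝ) ^ (-(((m:ℝ) - 1) / 2)) / (-(((m:ℝ) - 1) / 2)))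
        = 4 * B / ((m:ℝ) - 1) * (P:ℝ) ^ (-(((m:ℝ) - 1) / 2)) := by
      have hne : (m:ℝ) - 1 ≠ 0 := ne_of_gt hm1
      have hne' : (1:ℝ) - (m:ℝ) ≠ 0 := by intro h; apply hne; linarith
      field_simp
      ring
    rw [heq]
    exact mul_le_mul_of_nonneg_left hrpow
      (div_nonneg (by linarith) (by linarith))
  refine Summable.tsum_le_of_sum_le habs fun F => ?_
  set G := F.image (fun p : {p : ℕ // p.Prime ∧ P < p} => (p : ℕ)) with hGdef
  set N := max (G.sup id) P with hNdef
  have hGsub : G ⊆ Finset.Ico (P+1) (N+1) := by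
    intro n hn
    rw [Finset.mem_Ico]
    obtain ⟨p, hpF, rfl⟩ := Finset.mem_image.mp hn
    refine ⟨p.2.2, Nat.lt_succ_of_le (le_trans ?_ (le_max_left _ _))⟩
    exact Finset.le_sup (f := id) hn
  calc ∑ p ∈ F, |L p.1 - 1|
      ≤ ∑ p ∈ F, 2 * B * ((p:ℕ):ℝ) ^ (-s) :=
        Finset.sum_le_sum fun p _ => hL p.1 p.2.1
    _ = ∑ n ∈ G, 2 * B * (n:ℝ) ^ (-s) := by
        rw [hGdef, Finset.sum_image (fun a _ b _ h => Subtype.ext h)]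
    _ ≤ ∑ n ∈ Finset.Ico (P+1) (N+1), 2 * B * (n:ℝ) ^ (-s) :=
        Finset.sum_le_sum_of_subset_of_nonneg hGsub
          (fun n _ _ => by positivity)
    _ = 2 * B * ∑ n ∈ Finset.Ico (P+1) (N+1), (n:ℝ) ^ (-s) := by
        rw [Finset.mul_sum]
    _ ≤ 2 * B * (-(P:ℝ) ^ (-s + 1) / (-s + 1)) :=
        mul_le_mul_of_nonneg_left (hkey N (le_max_right _ _)) (by positivity)
    _ ≤ 4 * B / ((m:ℝ) - 1) * ((P:ℝ) - 1) ^ (-(((m : ℝ) - 1) / 2)) := hconst
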